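/- arXiv:math/0412154 — 4 statements merged into one kernel-verified Lean document; each statement's English description precedes it below -/
import Mathlib

section
/- For every real number x, the infinite product ∏_{k=0}^∞ (1 - 4x²/((2k+1)²π²)) converges and equals cos x. -/
open Real Filter Finset

-- odd double factorial product
noncomputable def Dfun : ℕ → ℝ := fun n => ∏ k ∈ Finset.range n, (2 * (k : ℝ) + 1)

lemma Dfun_pos (n : ℕ) : 0 < Dfun n :=
  Finset.prod_pos fun k _ => by positivity

lemma key1 (m N : ℕ) :
    ∏ k ∈ Finset.range N, (2 * (k : ℝ) + 1 + 2 * m) = Dfun (m + N) / Dfun m := by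
  rw [Dfun, Finset.prod_range_add, eq_div_iff (Dfun_pos m).ne', mul_comm]
  congr 1
  refine Finset.prod_congr rfl fun k _ => by push_cast; ring

lemma key2 (m M : ℕ) :
    ∏ k ∈ Finset.range (m + M), (2 * (k : ℝ) + 1 - 2 * m)
      = (-1) ^ m * Dfun m * Dfun M := by
  rw [Finset.prod_range_add]
  have h1 : ∏ k ∈ Finset.range m, (2 * (k : ℝ) + 1 - 2 * m) = (-1) ^ m * Dfun m := by
    rw [← Finset.prod_range_reflect]
    have : ∀ j ∈ Finset.range m, (2 * ((m - 1 - j : ℕ) : ℝ) + 1 - 2 * m) = -(2 * (j : ℝ) + 1) := by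
      intro j hj
      rw [Finset.mem_range] at hj
      have : (m - 1 - j : ℕ) = m - (j + 1) := by omega
      rw [this, Nat.cast_sub (by omega)]
      push_cast
      ring
    rw [Finset.prod_congr rfl this]
    have : ∀ j ∈ Finset.range m, -(2 * (j : ℝ) + 1) = (-1 : ℝ) * (2 * (j : ℝ) + 1) := by
      intro j _; ring
    rw [Finset.prod_congr rfl this, Finset.prod_mul_distrib, Finset.prod_const,
      Finset.card_range]
    rfl
  have h2 : ∏ k ∈ Finset.range M, (2 * ((m + k : ℕ) : ℝ) + 1 - 2 * m) = Dfun M := by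
    refine Finset.prod_congr rfl fun k _ => by push_cast; ring
  rw [h1, h2]

lemma key3 (m M : ℕ) :
    ∏ k ∈ Finset.range (m + M), (1 - 4 * (m : ℝ) ^ 2 / (2 * (k : ℝ) + 1) ^ 2)
      = (-1) ^ m * ∏ j ∈ Finset.range m,
          ((2 * ((M : ℝ) + j) + 1 + 2 * m) / (2 * ((M : ℝ) + j) + 1)) := by
  have hfk : ∀ k ∈ Finset.range (m + M), (1 - 4 * (m : ℝ) ^ 2 / (2 * (k : ℝ) + 1) ^ 2)
      = ((2 * (k : ℝ) + 1 - 2 * m) * (2 * (k : ℝ) + 1 + 2 * m)) / (2 * (k : ℝ) + 1) ^ 2 := by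
    intro k _
    have hk : (2 * (k : ℝ) + 1) ≠ 0 := by positivity
    field_simp
    ring
  rw [Finset.prod_congr rfl hfk, Finset.prod_div_distrib, Finset.prod_mul_distrib, key2,
    key1, Finset.prod_pow]
  have e1 : m + (m + M) = (m + M) + m := by omega
  have e2 : Dfun ((m + M) + m) = Dfun (m + M) * ∏ j ∈ Finset.range m, (2 * ((M : ℝ) + j) + 1 + 2 * m) := by
    rw [Dfun, Finset.prod_range_add]
    congr 1
    refine Finset.prod_congr rfl fun j _ => by push_cast; ring
  have e3 : Dfun (m + M) = Dfun M * ∏ j ∈ Finset.range m, (2 * ((M : ℝ) + j) + 1) := by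
    rw [Dfun, Nat.add_comm m M, Finset.prod_range_add]
    congr 1
    refine Finset.prod_congr rfl fun j _ => by push_cast; ring
  have hR2 : (0 : ℝ) < ∏ j ∈ Finset.range m, (2 * ((M : ℝ) + j) + 1) :=
    Finset.prod_pos fun j _ => by positivity
  have hDD : (∏ x ∈ Finset.range (m + M), (2 * (x : ℝ) + 1)) = Dfun (m + M) := rfl
  rw [e1, hDD, e2, e3, Finset.prod_div_distrib]
  have h1 := (Dfun_pos m).ne'
  have h2 := (Dfun_pos M).ne'
  have h4 := hR2.ne'
  field_simp

lemma key4 (m : ℕ) :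
    Filter.Tendsto (fun M : ℕ => (-1 : ℝ) ^ m * ∏ j ∈ Finset.range m,
        ((2 * ((M : ℝ) + j) + 1 + 2 * m) / (2 * ((M : ℝ) + j) + 1)))
      Filter.atTop (nhds ((-1) ^ m)) := by
  have h1 : ∀ j : ℕ, Filter.Tendsto (fun M : ℕ => (2 * ((M : ℝ) + j) + 1 + 2 * m) / (2 * ((M : ℝ) + j) + 1))
      Filter.atTop (nhds 1) := by
    intro j
    have hd : Filter.Tendsto (fun M : ℕ => 2 * ((M : ℝ) + j) + 1) Filter.atTop Filter.atTop := by
      apply Filter.tendsto_atTop_add_const_right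
      apply Filter.Tendsto.const_mul_atTop two_pos
      exact Filter.tendsto_atTop_add_const_right _ _ tendsto_natCast_atTop_atTop
    have h0 : Filter.Tendsto (fun M : ℕ => (2 * (m : ℝ)) / (2 * ((M : ℝ) + j) + 1))
        Filter.atTop (nhds 0) := Filter.Tendsto.div_atTop tendsto_const_nhds hd
    have h1' := h0.const_add (1 : ℝ)
    rw [add_zero] at h1'
    refine h1'.congr fun M => ?_
    have hne : (2 * ((M : ℝ) + j) + 1) ≠ 0 := by positivity
    field_simp
  have h2 := tendsto_finset_prod (Finset.range m) (fun j _ => h1 j)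
  simpa using h2.const_mul ((-1 : ℝ) ^ m)

lemma prod_range_two_mul (g : ℕ → ℝ) (n : ℕ) :
    ∏ j ∈ Finset.range (2 * n), g j = ∏ k ∈ Finset.range n, (g (2 * k) * g (2 * k + 1)) := by
  induction n with
  | zero => simp
  | succ n ih =>
    rw [show 2 * (n + 1) = 2 * n + 1 + 1 from by ring, Finset.prod_range_succ,
      Finset.prod_range_succ, ih, Finset.prod_range_succ, mul_assoc]

theorem cos_eq_tprod (x : ℝ) :
    Multipliable (fun k : ℕ => 1 - 4 * x ^ 2 / ((2 * (k : ℝ) + 1) ^ 2 * π ^ 2)) ∧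
    ∏' k : ℕ, (1 - 4 * x ^ 2 / ((2 * (k : ℝ) + 1) ^ 2 * π ^ 2)) = Real.cos x := by
  have hπ := Real.pi_pos
  set a : ℕ → ℝ := fun k => 4 * x ^ 2 / ((2 * (k : ℝ) + 1) ^ 2 * π ^ 2) with ha
  have hanonneg : ∀ k, 0 ≤ a k := fun k => by rw [ha]; positivity
  have hsa : Summable a := by
    have h0 : Summable (fun k : ℕ => (1 : ℝ) / ((k : ℝ) + 1) ^ 2) := by
      have h1 := (Real.summable_one_div_nat_pow (p := 2)).mpr one_lt_two
      have h2 := (summable_nat_add_iff 1).mpr h1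
      refine h2.congr fun k => ?_
      push_cast
      ring
    refine Summable.of_nonneg_of_le hanonneg ?_ (h0.mul_left (4 * x ^ 2 / π ^ 2))
    intro k
    have hπ0 : π ≠ 0 := Real.pi_pos.ne'
    have hk0 : (2 * (k : ℝ) + 1) ≠ 0 := by positivity
    have e : a k = 4 * x ^ 2 / π ^ 2 * (1 / (2 * (k : ℝ) + 1) ^ 2) := by
      rw [ha]; field_simp
    rw [e]
    refine mul_le_mul_of_nonneg_left ?_ (by positivity)
    refine one_div_le_one_div_of_le (by positivity) ?_
    nlinarith [Nat.cast_nonneg (α := ℝ) k]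
  have hmul : Multipliable (fun k : ℕ => 1 - a k) := by
    have h2 : ∀ᶠ k in Filter.atTop, a k < 1 / 2 :=
      hsa.tendsto_atTop_zero.eventually_lt_const (by norm_num)
    obtain ⟨N, hN⟩ := Filter.eventually_atTop.mp h2
    have hpos : ∀ k : ℕ, 0 < 1 - a (k + N) := by
      intro k
      have := hN (k + N) (Nat.le_add_left N k)
      linarith
    have hlog : Summable fun k => Real.log (1 - a (k + N)) := by
      have hb : ∀ k, |Real.log (1 - a (k + N))| ≤ 2 * a (k + N) := by
        intro k
        have haN := hanonneg (k + N)
        have hlt := hN (k + N) (Nat.le_add_left N k)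
        have h1 : |a (k + N)| < 1 := by rw [abs_of_nonneg haN]; linarith
        have h2' := Real.abs_log_sub_add_sum_range_le h1 1
        simp only [Finset.sum_range_one, pow_one, Nat.cast_zero, zero_add, div_one] at h2'
        rw [abs_of_nonneg haN] at h2'
        norm_num at h2'
        have htri : |Real.log (1 - a (k + N))|
            ≤ |a (k + N) + Real.log (1 - a (k + N))| + a (k + N) := by
          have he : Real.log (1 - a (k + N))
              = (a (k + N) + Real.log (1 - a (k + N))) - a (k + N) := by ring
          nth_rewrite 1 [he]
          calc |(a (k + N) + Real.log (1 - a (k + N))) - a (k + N)|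
              ≤ |a (k + N) + Real.log (1 - a (k + N))| + |a (k + N)| := abs_sub _ _
            _ = |a (k + N) + Real.log (1 - a (k + N))| + a (k + N) := by
                rw [abs_of_nonneg haN]
        have hfrac : a (k + N) ^ 2 / (1 - a (k + N)) ≤ a (k + N) := by
          rw [div_le_iff₀ (by linarith)]
          nlinarith
        linarith
      have hs2 := ((summable_nat_add_iff N).mpr hsa).mul_left 2
      exact Summable.of_abs (Summable.of_nonneg_of_le (fun k => abs_nonneg _) hb hs2)
    have hprod : HasProd (fun k => 1 - a (k + N))
        (Real.exp (∑' k, Real.log (1 - a (k + N)))) := by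
      have h3 := hlog.hasSum.rexp
      have he : (rexp ∘ fun k => Real.log (1 - a (k + N))) = fun k => 1 - a (k + N) :=
        funext fun k => Real.exp_log (hpos k)
      rwa [he] at h3
    exact (HasProd.prod_range_mul (f := fun k => 1 - a k) (k := N) hprod).multipliable
  have hT : Filter.Tendsto (fun n => ∏ k ∈ Finset.range n, (1 - a k))
      Filter.atTop (nhds (Real.cos x)) := by
    by_cases hs : Real.sin x = 0
    · obtain ⟨m, hm⟩ := Real.sin_eq_zero_iff.mp hs
      set n0 := m.natAbs with hn0
      have hmabs : |(m : ℝ)| = (n0 : ℝ) := by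
        rw [hn0, Nat.cast_natAbs, Int.cast_abs]
      have hx2 : x ^ 2 = (n0 : ℝ) ^ 2 * π ^ 2 := by
        rw [← hm, ← hmabs]
        rw [sq_abs]
        ring
      have hcos : Real.cos x = (-1 : ℝ) ^ n0 := by
        have h1 : Real.cos x = Real.cos ((n0 : ℝ) * π) := by
          rw [← Real.cos_abs x, ← hm, abs_mul, abs_of_pos hπ, hmabs]
        rw [h1]
        have := Real.cos_nat_mul_pi_sub 0 n0
        simpa using this
      have hfk : ∀ k : ℕ, 1 - a k = 1 - 4 * (n0 : ℝ) ^ 2 / (2 * (k : ℝ) + 1) ^ 2 := by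
        intro k
        rw [ha]
        simp only
        rw [hx2]
        have h2k : ((2 * (k : ℝ) + 1) ^ 2) ≠ 0 := by positivity
        have hπ2 : (π : ℝ) ^ 2 ≠ 0 := by positivity
        field_simp
      rw [hcos, ← Filter.tendsto_add_atTop_iff_nat n0]
      refine (key4 n0).congr fun M => ?_
      rw [show M + n0 = n0 + M from by omega, Finset.prod_congr rfl fun k _ => hfk k, key3]
    · have hx0 : x ≠ 0 := fun h => hs (by simp [h])
      have hπ0 : π ≠ 0 := hπ.ne'
      have hB : ∀ j : ℕ, (1 - x ^ 2 / (π ^ 2 * ((j : ℝ) + 1) ^ 2)) ≠ 0 := by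
        intro j hB0
        apply hs
        have hden : (π ^ 2 * ((j : ℝ) + 1) ^ 2) ≠ 0 := by positivity
        have hx2 : x ^ 2 = (π * ((j : ℝ) + 1)) ^ 2 := by
          field_simp at hB0
          nlinarith [hB0]
        have hsin : Real.sin (π * ((j : ℝ) + 1)) = 0 := by
          rw [mul_comm, show ((j : ℝ) + 1) = ((j + 1 : ℕ) : ℝ) from by push_cast; ring,
            Real.sin_nat_mul_pi]
        rcases sq_eq_sq_iff_eq_or_eq_neg.mp hx2 with h | h
        · rw [h]; exact hsin
        · rw [h, Real.sin_neg, hsin, neg_zero]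
      have h1 : Filter.Tendsto
          (fun n => x * ∏ j ∈ Finset.range n, (1 - x ^ 2 / (π ^ 2 * ((j : ℝ) + 1) ^ 2)))
          Filter.atTop (nhds (Real.sin x)) := by
        have h := Real.tendsto_euler_sin_prod (x / π)
        have e : π * (x / π) = x := by field_simp
        rw [e] at h
        refine h.congr fun n => ?_
        congr 1
        refine Finset.prod_congr rfl fun j _ => ?_
        rw [div_pow, div_div]
      have h2 : Filter.Tendsto
          (fun n => 2 * x * ∏ j ∈ Finset.range (2 * n),
            (1 - 4 * x ^ 2 / (π ^ 2 * ((j : ℝ) + 1) ^ 2)))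
          Filter.atTop (nhds (Real.sin (2 * x))) := by
        have h := Real.tendsto_euler_sin_prod (2 * x / π)
        have e : π * (2 * x / π) = 2 * x := by field_simp
        rw [e] at h
        have hdouble : Filter.Tendsto (fun n : ℕ => 2 * n) Filter.atTop Filter.atTop :=
          Filter.tendsto_atTop_mono (fun n => Nat.le_mul_of_pos_left n two_pos) Filter.tendsto_id
        have h' := h.comp hdouble
        refine h'.congr fun n => ?_
        simp only [Function.comp_apply, id_eq]
        congr 1
        refine Finset.prod_congr rfl fun j _ => ?_
        rw [div_pow, div_div]
        congr 2
        ring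
      have key : ∀ n : ℕ,
          (2 * x * ∏ j ∈ Finset.range (2 * n), (1 - 4 * x ^ 2 / (π ^ 2 * ((j : ℝ) + 1) ^ 2)))
            / (x * ∏ j ∈ Finset.range n, (1 - x ^ 2 / (π ^ 2 * ((j : ℝ) + 1) ^ 2)))
          = 2 * ∏ k ∈ Finset.range n, (1 - a k) := by
        intro n
        rw [prod_range_two_mul]
        have hsplit : ∀ k ∈ Finset.range n,
            ((1 - 4 * x ^ 2 / (π ^ 2 * (((2 * k : ℕ) : ℝ) + 1) ^ 2)) *
              (1 - 4 * x ^ 2 / (π ^ 2 * (((2 * k + 1 : ℕ) : ℝ) + 1) ^ 2)))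
            = (1 - a k) * (1 - x ^ 2 / (π ^ 2 * ((k : ℝ) + 1) ^ 2)) := by
          intro k _
          rw [ha]
          simp only
          have c1 : ((2 * k : ℕ) : ℝ) = 2 * (k : ℝ) := by push_cast; ring
          have c2 : ((2 * k + 1 : ℕ) : ℝ) = 2 * (k : ℝ) + 1 := by push_cast; ring
          rw [c1, c2]
          have h2k : (2 * (k : ℝ) + 1) ≠ 0 := by positivity
          have hk1 : ((k : ℝ) + 1) ≠ 0 := by positivity
          field_simp
          ring
        rw [Finset.prod_congr rfl hsplit, Finset.prod_mul_distrib]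
        have hPB : (∏ j ∈ Finset.range n, (1 - x ^ 2 / (π ^ 2 * ((j : ℝ) + 1) ^ 2))) ≠ 0 :=
          Finset.prod_ne_zero_iff.mpr fun j _ => hB j
        set P := ∏ k ∈ Finset.range n, (1 - a k) with hP
        set Q := ∏ j ∈ Finset.range n, (1 - x ^ 2 / (π ^ 2 * ((j : ℝ) + 1) ^ 2)) with hQ
        rw [show 2 * x * (P * Q) = (2 * P) * (x * Q) from by ring]
        exact mul_div_cancel_right₀ _ (mul_ne_zero hx0 hPB)
      have h3 := h2.div h1 hs
      have h4 : Real.sin (2 * x) / Real.sin x = 2 * Real.cos x := by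
        rw [Real.sin_two_mul]
        field_simp
      rw [h4] at h3
      have h5 := h3.congr key
      have h6 := h5.const_mul (1 / 2 : ℝ)
      have h7 : (1 / 2 : ℝ) * (2 * Real.cos x) = Real.cos x := by ring
      rw [h7] at h6
      exact h6.congr fun n => by ring
  exact ⟨hmul, tendsto_nhds_unique hmul.hasProd.tendsto_prod_nat hT⟩
end

section
/- Define a_m := (2/π)^{2m} · ∑_{k=0}^∞ 1/(2k+1)^{2m} for each integer m ≥ 1, so that ∑_{k=0}^∞ 1/(2k+1)^{2m} = a_m·(π/2)^{2m}. Then a_1 = 1/2, and for every m ≥ 1 the recursion a_{m+1} = (2/(2m+1)) · ∑_{i=1}^{m} a_i · a_{m+1-i} holds. -/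
open Real Filter

noncomputable def erJ (k : ℕ) : ℝ := 2 * (k : ℝ) + 1
noncomputable def erB (m k : ℕ) : ℝ := 1 / (2 * (k : ℝ) + 1) ^ (2 * m)
noncomputable def erP (m a c : ℕ) : ℝ :=
  if c = a then 0 else erB m a / ((erJ c) ^ 2 - (erJ a) ^ 2)
noncomputable def erS : ℝ := ∑' d : ℕ, 1 / ((d : ℝ) + 1) ^ 2

lemma erJ_pos (k : ℕ) : 0 < erJ k := by unfold erJ; positivity

lemma er_hasSum_T (k : ℕ) :
    HasSum (fun l : ℕ => if l = k then (0 : ℝ) else 1 / ((erJ l) ^ 2 - (erJ k) ^ 2))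
      (1 / (4 * (erJ k) ^ 2)) := by
  set N : ℕ := 2 * k + 1 with hN
  set g : ℕ → ℝ := fun l => if l = k then 0 else 1 / ((l : ℝ) - k) with hg
  set v : ℕ → ℝ := fun l => g l - g (l + N) with hv
  -- values of g at shifted points
  have hgshift : ∀ n : ℕ, g (n + N) = 1 / ((n : ℝ) + k + 1) := by
    intro n
    have h1 : n + N ≠ k := by omega
    simp only [hg, if_neg h1]
    push_cast [hN]; ring_nf
  -- the reflection: sum of g over range N is 0
  have hgN : ∑ l ∈ Finset.range N, g l = 0 := by
    have hrefl := Finset.sum_range_reflect g N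
    have hneg : ∀ j ∈ Finset.range N, g (N - 1 - j) = - g j := by
      intro j hj
      rw [Finset.mem_range] at hj
      rcases eq_or_ne j k with rfl | hjk
      · have h0 : N - 1 - j = j := by omega
        rw [h0]; simp [hg]
      · have hj2 : N - 1 - j ≠ k := by omega
        simp only [hg, if_neg hjk, if_neg hj2]
        have hcast : ((N - 1 - j : ℕ) : ℝ) = 2 * k - j := by
          have h6 : N - 1 - j = 2 * k - j := by omega
          rw [h6]; push_cast [Nat.cast_sub (by omega : j ≤ 2 * k)]; ring
        rw [hcast, show (2 * (k:ℝ) - j - k) = -((j:ℝ) - k) by ring, ← div_neg]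
    rw [Finset.sum_congr rfl hneg, Finset.sum_neg_distrib] at hrefl
    linarith
  -- v is summable
  have hvsum : Summable v := by
    rw [← summable_nat_add_iff (k + 1)]
    have hfn : (fun n : ℕ => v (n + (k + 1))) =
        fun n : ℕ => 1 / ((n : ℝ) + 1) - 1 / ((n : ℝ) + 1 + N) := by
      funext n
      have h1 : n + (k + 1) ≠ k := by omega
      have h2 : n + (k + 1) + N = (n + N) + (k + 1) := by omega
      simp only [hv, hg, if_neg h1]
      rw [h2]
      have h3 : (n + N) + (k + 1) ≠ k := by omega
      rw [if_neg h3]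
      push_cast; ring_nf
    rw [hfn]
    apply Summable.of_nonneg_of_le
      (g := fun n : ℕ => 1 / ((n : ℝ) + 1) - 1 / ((n : ℝ) + 1 + N))
      (f := fun n : ℕ => (N : ℝ) * (1 / ((n : ℝ) + 1) ^ 2))
    · intro n
      rw [sub_nonneg]
      apply div_le_div_of_nonneg_left (by norm_num) (by positivity)
      have : (0:ℝ) ≤ (N:ℝ) := Nat.cast_nonneg N
      linarith
    · intro n
      have hn1 : (0:ℝ) < (n : ℝ) + 1 := by positivity
      have hn2 : (0:ℝ) < (n : ℝ) + 1 + N := by positivity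
      rw [div_sub_div _ _ (ne_of_gt hn1) (ne_of_gt hn2), mul_one_div,
        div_le_div_iff₀ (by positivity) (by positivity)]
      have hNn : (0:ℝ) ≤ (N:ℝ) := Nat.cast_nonneg N
      have hsq : ((n:ℝ)+1)^2 ≤ ((n:ℝ)+1)*((n:ℝ)+1+N) := by nlinarith
      nlinarith [mul_le_mul_of_nonneg_left hsq hNn]
    · exact Summable.mul_left _ (by
        have h : Summable (fun n : ℕ => 1 / (n : ℝ) ^ 2) :=
          summable_one_div_nat_pow.mpr one_lt_two
        have := (summable_nat_add_iff 1).mpr h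
        simpa using this)
  -- partial sums of v
  have hps : ∀ n : ℕ, ∑ l ∈ Finset.range n, v l = - ∑ i ∈ Finset.range N, g (n + i) := by
    intro n
    have h1 : ∑ l ∈ Finset.range n, v l =
        ∑ l ∈ Finset.range n, g l - ∑ l ∈ Finset.range n, g (l + N) := by
      simp [hv, Finset.sum_sub_distrib]
    have h2 : ∑ x ∈ Finset.range (N + n), g x =
        ∑ x ∈ Finset.range N, g x + ∑ x ∈ Finset.range n, g (N + x) :=
      Finset.sum_range_add g N n
    have h3 : ∑ x ∈ Finset.range (n + N), g x =
        ∑ x ∈ Finset.range n, g x + ∑ x ∈ Finset.range N, g (n + x) :=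
      Finset.sum_range_add g n N
    have h4 : (N + n) = (n + N) := by omega
    have h5 : ∑ x ∈ Finset.range n, g (N + x) = ∑ x ∈ Finset.range n, g (x + N) := by
      apply Finset.sum_congr rfl; intro x _; rw [Nat.add_comm]
    rw [h4, h5, hgN, zero_add] at h2
    rw [h1, ← h2, h3]
    ring
  -- partial sums tend to 0
  have htend : Tendsto (fun n => ∑ l ∈ Finset.range n, v l) atTop (nhds 0) := by
    have hub : ∀ᶠ n : ℕ in atTop, ∑ l ∈ Finset.range n, v l ≤ 0 := by
      filter_upwards [eventually_ge_atTop (k + 1)] with n hn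
      rw [hps n]
      simp only [neg_nonpos]
      apply Finset.sum_nonneg
      intro i _
      have h1 : n + i ≠ k := by omega
      simp only [hg, if_neg h1]
      have hpos : (0:ℝ) < ((n + i : ℕ) : ℝ) - k := by
        push_cast
        have hcast : (k:ℝ) + 1 ≤ (n:ℝ) := by exact_mod_cast hn
        have : (0:ℝ) ≤ (i:ℝ) := Nat.cast_nonneg i
        linarith
      positivity
    have hlb : ∀ᶠ n : ℕ in atTop,
        -((N : ℝ) * ((n : ℝ) - k)⁻¹) ≤ ∑ l ∈ Finset.range n, v l := by
      filter_upwards [eventually_ge_atTop (k + 1)] with n hn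
      rw [hps n, neg_le_neg_iff]
      have hcast : (k:ℝ) + 1 ≤ (n:ℝ) := by exact_mod_cast hn
      have hbd : ∀ i ∈ Finset.range N, g (n + i) ≤ ((n : ℝ) - k)⁻¹ := by
        intro i _
        have h1 : n + i ≠ k := by omega
        simp only [hg, if_neg h1]
        have hi : (0:ℝ) ≤ (i:ℝ) := Nat.cast_nonneg i
        rw [one_div]
        apply inv_anti₀ (by linarith)
        push_cast; linarith
      calc ∑ i ∈ Finset.range N, g (n + i) ≤ ∑ i ∈ Finset.range N, ((n:ℝ) - k)⁻¹ :=
            Finset.sum_le_sum hbd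
        _ = (N : ℝ) * ((n : ℝ) - k)⁻¹ := by
            rw [Finset.sum_const, Finset.card_range, nsmul_eq_mul]
    have h0 : Tendsto (fun n : ℕ => -((N : ℝ) * ((n : ℝ) - k)⁻¹)) atTop (nhds 0) := by
      have h1 : Tendsto (fun n : ℕ => (n : ℝ) - k) atTop atTop := by
        have := tendsto_natCast_atTop_atTop (R := ℝ)
        exact tendsto_atTop_add_const_right atTop (-(k:ℝ)) this
      have h2 := h1.inv_tendsto_atTop
      have h3 : Tendsto (fun n : ℕ => (N : ℝ) * ((n : ℝ) - k)⁻¹) atTop (nhds ((N:ℝ) * 0)) :=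
        h2.const_mul _
      rw [mul_zero] at h3
      simpa using h3.neg
    exact tendsto_of_tendsto_of_tendsto_of_le_of_le' h0 tendsto_const_nhds hlb hub
  -- v has sum 0
  have hv0 : HasSum v 0 := by
    have h1 := hvsum.hasSum
    have h2 := h1.tendsto_sum_nat
    have h3 := tendsto_nhds_unique h2 htend
    rwa [h3] at h1
  -- the delta function
  have he : HasSum (fun l : ℕ => if l = k then 1 / erJ k else (0:ℝ)) (1 / erJ k) :=
    hasSum_ite_eq k _
  have hsum : HasSum (fun l : ℕ => v l + (if l = k then 1 / erJ k else 0)) (0 + 1 / erJ k) :=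
    hv0.add he
  have hmul := hsum.mul_left (1 / (4 * erJ k))
  have hJk := erJ_pos k
  have hfun : (fun l : ℕ => (1 / (4 * erJ k)) * (v l + (if l = k then 1 / erJ k else 0))) =
      fun l : ℕ => if l = k then (0:ℝ) else 1 / ((erJ l) ^ 2 - (erJ k) ^ 2) := by
    funext l
    rcases eq_or_ne l k with rfl | hlk
    · have hvl : v l = - (1 / erJ l) := by
        rw [hv]
        simp only
        rw [hgshift l]
        simp only [hg, if_pos rfl]
        unfold erJ; push_cast; ring
      rw [hvl]
      simp [erJ]
    · have hvl : v l = 1 / ((l:ℝ) - k) - 1 / ((l:ℝ) + k + 1) := by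
        rw [hv]
        simp only
        rw [hgshift l]
        simp only [hg, if_neg hlk]
      rw [hvl, if_neg hlk, if_neg hlk]
      have hlkR : ((l:ℝ) - k) ≠ 0 := by
        intro h
        exact hlk (by exact_mod_cast sub_eq_zero.mp h)
      have hl2 : ((l:ℝ) + k + 1) ≠ 0 := by positivity
      have hden : (erJ l) ^ 2 - (erJ k) ^ 2 = 4 * (((l:ℝ) - k) * ((l:ℝ) + k + 1)) := by
        unfold erJ; ring
      rw [hden]
      have h4 : 4 * (((l:ℝ) - k) * ((l:ℝ) + k + 1)) ≠ 0 := by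
        intro h
        rcases mul_eq_zero.mp h with h | h
        · norm_num at h
        · rcases mul_eq_zero.mp h with h | h
          · exact hlkR h
          · exact hl2 h
      rw [eq_div_iff h4]
      have hErJ : erJ k = (l:ℝ) + k + 1 - ((l:ℝ) - k) := by unfold erJ; ring
      field_simp
      unfold erJ
      ring
  rw [hfun] at hmul
  have hval : (1 / (4 * erJ k)) * (0 + 1 / erJ k) = 1 / (4 * (erJ k) ^ 2) := by
    field_simp; ring
  rwa [hval] at hmul
lemma erB_eq (m k : ℕ) : erB m k = 1 / (erJ k) ^ (2 * m) := rfl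
lemma erB_pos (m k : ℕ) : 0 < erB m k := by unfold erB; positivity

lemma erJ_inj {k l : ℕ} (h : erJ k = erJ l) : k = l := by
  unfold erJ at h
  have : (k : ℝ) = l := by linarith
  exact_mod_cast this

lemma erJ_sq_ne {k l : ℕ} (h : l ≠ k) : (erJ l) ^ 2 ≠ (erJ k) ^ 2 := by
  intro hsq
  have h0 : (erJ l - erJ k) * (erJ l + erJ k) = 0 := by linear_combination hsq
  rcases mul_eq_zero.mp h0 with h1 | h1
  · exact h (erJ_inj (by linarith))
  · nlinarith [erJ_pos k, erJ_pos l]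

lemma erJ_sq_sub_abs {k l : ℕ} (h : l ≠ k) :
    |(erJ l) ^ 2 - (erJ k) ^ 2| = 4 * (|(l : ℝ) - k| * ((l : ℝ) + k + 1)) := by
  have h1 : (erJ l) ^ 2 - (erJ k) ^ 2 = 4 * (((l : ℝ) - k) * ((l : ℝ) + k + 1)) := by
    unfold erJ; ring
  rw [h1, abs_mul, abs_mul, abs_of_nonneg (by norm_num : (0:ℝ) ≤ 4),
    abs_of_pos (by positivity : (0:ℝ) < (l : ℝ) + k + 1)]

lemma er_summable_sq : Summable (fun d : ℕ => 1 / ((d : ℝ) + 1) ^ 2) := by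
  have h : Summable (fun n : ℕ => 1 / (n : ℝ) ^ 2) :=
    summable_one_div_nat_pow.mpr one_lt_two
  have := (summable_nat_add_iff 1).mpr h
  simpa using this

lemma erS_nonneg : 0 ≤ erS :=
  tsum_nonneg (fun d => by positivity)

lemma erB_le (m k : ℕ) (hm : 1 ≤ m) : erB m k ≤ 1 / ((k : ℝ) + 1) ^ 2 := by
  unfold erB
  rw [div_le_div_iff₀ (by positivity) (by positivity)]
  have h1 : ((k : ℝ) + 1) ^ 2 ≤ (2 * (k : ℝ) + 1) ^ 2 := by
    apply pow_le_pow_left₀ (by positivity); linarith [Nat.cast_nonneg (α := ℝ) k]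
  have h2 : (2 * (k : ℝ) + 1) ^ 2 ≤ (2 * (k : ℝ) + 1) ^ (2 * m) := by
    apply pow_le_pow_right₀ (by linarith [Nat.cast_nonneg (α := ℝ) k]); omega
  nlinarith

lemma er_summable_B {m : ℕ} (hm : 1 ≤ m) : Summable (erB m) :=
  Summable.of_nonneg_of_le (fun k => (erB_pos m k).le) (fun k => erB_le m k hm) er_summable_sq

/-- the row comparison functions -/
noncomputable def erA (k l : ℕ) : ℝ := if l = k then 0 else 1 / ((l : ℝ) - k) ^ 2
noncomputable def erC (k l : ℕ) : ℝ := 1 / ((l : ℝ) + k + 1) ^ 2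

lemma erA_shift (k : ℕ) : (fun n : ℕ => erA k (n + (k + 1))) =
    fun n : ℕ => 1 / ((n : ℝ) + 1) ^ 2 := by
  funext n
  have h1 : n + (k + 1) ≠ k := by omega
  rw [erA, if_neg h1]
  push_cast; ring_nf

lemma er_summable_A (k : ℕ) : Summable (erA k) := by
  rw [← summable_nat_add_iff (k + 1), erA_shift k]
  exact er_summable_sq

lemma er_tsum_A_le (k : ℕ) : ∑' l, erA k l ≤ 2 * erS := by
  rw [← Summable.sum_add_tsum_nat_add (k + 1) (er_summable_A k)]
  have h1 : ∑' n : ℕ, erA k (n + (k + 1)) = erS := by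
    rw [erA_shift k]; rfl
  rw [h1]
  have h2 : ∑ l ∈ Finset.range (k + 1), erA k l ≤ erS := by
    rw [Finset.sum_range_succ, erA, if_pos rfl, add_zero]
    have h3 : ∀ j ∈ Finset.range k, erA k (k - 1 - j) = 1 / ((j : ℝ) + 1) ^ 2 := by
      intro j hj
      rw [Finset.mem_range] at hj
      have h4 : k - 1 - j ≠ k := by omega
      rw [erA, if_neg h4]
      have h5 : ((k - 1 - j : ℕ) : ℝ) = (k : ℝ) - 1 - j := by
        push_cast [Nat.cast_sub (by omega : j ≤ k - 1), Nat.cast_sub (by omega : 1 ≤ k)]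
        ring
      rw [h5]
      congr 1
      ring
    rw [← Finset.sum_range_reflect (erA k) k, Finset.sum_congr rfl h3]
    exact Summable.sum_le_tsum _ (fun d _ => by positivity) er_summable_sq
  linarith

lemma er_summable_C (k : ℕ) : Summable (erC k) := by
  apply Summable.of_nonneg_of_le (fun l => by unfold erC; positivity) _ er_summable_sq
  intro l
  unfold erC
  apply div_le_div_of_nonneg_left (by norm_num) (by positivity)
  have : (0:ℝ) ≤ (k:ℝ) := Nat.cast_nonneg k
  nlinarith [Nat.cast_nonneg (α := ℝ) l]

lemma er_tsum_C_le (k : ℕ) : ∑' l, erC k l ≤ erS := by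
  apply Summable.tsum_le_tsum _ (er_summable_C k) er_summable_sq
  intro l
  unfold erC
  apply div_le_div_of_nonneg_left (by norm_num) (by positivity)
  have : (0:ℝ) ≤ (k:ℝ) := Nat.cast_nonneg k
  nlinarith [Nat.cast_nonneg (α := ℝ) l]

/-- the uniform AM-GM bound -/
lemma er_u_le (k l : ℕ) :
    (if l = k then (0:ℝ) else 1 / |(erJ l) ^ 2 - (erJ k) ^ 2|) ≤
      (1/8) * (erA k l + erC k l) := by
  rcases eq_or_ne l k with rfl | hlk
  · rw [if_pos rfl]
    have h1 : 0 ≤ erA l l := by rw [erA, if_pos rfl]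
    have h2 : 0 ≤ erC l l := by unfold erC; positivity
    linarith
  · rw [if_neg hlk, erJ_sq_sub_abs hlk, erA, if_neg hlk, erC]
    set a : ℝ := |(l : ℝ) - k| with ha
    set b : ℝ := (l : ℝ) + k + 1 with hb
    have ha0 : 0 < a := by
      rw [ha, abs_pos]
      intro h
      exact hlk (by exact_mod_cast sub_eq_zero.mp h)
    have hb0 : 0 < b := by rw [hb]; positivity
    have hsq : ((l : ℝ) - k) ^ 2 = a ^ 2 := (sq_abs _).symm
    rw [hsq]
    clear_value a b
    rw [div_add_div _ _ (ne_of_gt (pow_pos ha0 2)) (ne_of_gt (pow_pos hb0 2)),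
      ← mul_div_assoc, div_le_div_iff₀ (by positivity) (by positivity)]
    nlinarith [mul_nonneg (mul_pos ha0 hb0).le (sq_nonneg (a - b)), mul_pos ha0 hb0]

lemma er_summable_u (k : ℕ) :
    Summable (fun l : ℕ => if l = k then (0:ℝ) else 1 / |(erJ l) ^ 2 - (erJ k) ^ 2|) := by
  apply Summable.of_nonneg_of_le _ (er_u_le k)
    (((er_summable_A k).add (er_summable_C k)).mul_left (1/8))
  intro l
  rcases eq_or_ne l k with rfl | h
  · rw [if_pos rfl]
  · rw [if_neg h]; positivity

lemma er_tsum_u_le (k : ℕ) :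
    ∑' l : ℕ, (if l = k then (0:ℝ) else 1 / |(erJ l) ^ 2 - (erJ k) ^ 2|) ≤ erS := by
  have h1 : ∑' l : ℕ, (if l = k then (0:ℝ) else 1 / |(erJ l) ^ 2 - (erJ k) ^ 2|) ≤
      ∑' l, (1/8) * (erA k l + erC k l) := by
    apply Summable.tsum_le_tsum (er_u_le k) (er_summable_u k)
      (((er_summable_A k).add (er_summable_C k)).mul_left (1/8))
  have h2 : ∑' l, (1/8 : ℝ) * (erA k l + erC k l) =
      (1/8) * ((∑' l, erA k l) + ∑' l, erC k l) := by
    rw [tsum_mul_left, Summable.tsum_add (er_summable_A k) (er_summable_C k)]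
  have h3 := er_tsum_A_le k
  have h4 := er_tsum_C_le k
  have h5 := erS_nonneg
  rw [h2] at h1
  linarith

/-- absolute value of P -/
lemma er_absP (m k l : ℕ) : |erP m k l| =
    erB m k * (if l = k then (0:ℝ) else 1 / |(erJ l) ^ 2 - (erJ k) ^ 2|) := by
  rcases eq_or_ne l k with rfl | h
  · rw [erP, if_pos rfl, if_pos rfl, abs_zero, mul_zero]
  · rw [erP, if_neg h, if_neg h, abs_div, abs_of_pos (erB_pos m k), div_eq_mul_one_div]

lemma er_rowP (m k : ℕ) :
    HasSum (fun l => erP m k l) ((1/4) * erB (m + 1) k) := by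
  have h := (er_hasSum_T k).mul_left (erB m k)
  have hfun : (fun l => erB m k * (if l = k then (0:ℝ) else 1 / ((erJ l) ^ 2 - (erJ k) ^ 2))) =
      fun l => erP m k l := by
    funext l
    rcases eq_or_ne l k with rfl | hlk
    · rw [if_pos rfl, mul_zero, erP, if_pos rfl]
    · rw [if_neg hlk, erP, if_neg hlk]
      ring
  rw [hfun] at h
  have hval : erB m k * (1 / (4 * (erJ k) ^ 2)) = (1/4) * erB (m + 1) k := by
    rw [erB_eq, erB_eq]
    have hJ := erJ_pos k
    have h2 : (erJ k) ^ (2 * (m + 1)) = (erJ k) ^ (2 * m) * (erJ k) ^ 2 := by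
      rw [mul_add, mul_one, pow_add]
    rw [h2]
    field_simp
  rwa [hval] at h

lemma er_colP_abs_le (m k l : ℕ) : |erP m l k| ≤ erB m l := by
  rcases eq_or_ne k l with rfl | h
  · rw [erP, if_pos rfl, abs_zero]; exact (erB_pos m k).le
  · rw [erP, if_neg h, abs_div, abs_of_pos (erB_pos m l)]
    apply div_le_self (erB_pos m l).le
    have h8 : (8:ℝ) ≤ |(erJ k) ^ 2 - (erJ l) ^ 2| := by
      rw [erJ_sq_sub_abs h]
      have h1 : (1:ℝ) ≤ |(k : ℝ) - l| := by
        rcases Nat.lt_or_ge k l with hlt | hge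
        · rw [abs_sub_comm]
          have hc : (k:ℝ) + 1 ≤ l := by exact_mod_cast hlt
          rw [abs_of_pos (by linarith)]
          linarith
        · have hgt : l < k := by omega
          have hc : (l:ℝ) + 1 ≤ k := by exact_mod_cast hgt
          rw [abs_of_pos (by linarith)]
          linarith
      have h2 : (2:ℝ) ≤ (k : ℝ) + l + 1 := by
        have hc : (1:ℕ) ≤ k + l := by omega
        have : (1:ℝ) ≤ (k:ℝ) + l := by exact_mod_cast hc
        linarith
      nlinarith [abs_nonneg ((k:ℝ) - l)]
    linarith

lemma er_summable_colP {m : ℕ} (hm : 1 ≤ m) (k : ℕ) : Summable (fun l => erP m l k) := by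
  rw [← summable_abs_iff]
  exact Summable.of_nonneg_of_le (fun l => abs_nonneg _)
    (fun l => er_colP_abs_le m k l) (er_summable_B hm)

lemma er_summable_uncurryP {m : ℕ} (hm : 1 ≤ m) :
    Summable (Function.uncurry (erP m)) := by
  rw [← summable_abs_iff]
  have habs : (fun p : ℕ × ℕ => |Function.uncurry (erP m) p|) =
      fun p : ℕ × ℕ => |erP m p.1 p.2| := rfl
  rw [habs, summable_prod_of_nonneg (fun p => abs_nonneg _)]
  have hrow : ∀ k, (fun l => |erP m k l|) =
      fun l => erB m k * (if l = k then (0:ℝ) else 1 / |(erJ l) ^ 2 - (erJ k) ^ 2|) := by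
    intro k; funext l; exact er_absP m k l
  constructor
  · intro k
    rw [hrow k]
    exact (er_summable_u k).mul_left _
  · apply Summable.of_nonneg_of_le (fun k => tsum_nonneg fun l => abs_nonneg _) _
      ((er_summable_B hm).mul_right erS)
    intro k
    calc ∑' l, |erP m k l|
        = erB m k * ∑' l, (if l = k then (0:ℝ) else 1 / |(erJ l) ^ 2 - (erJ k) ^ 2|) := by
          rw [hrow k, tsum_mul_left]
      _ ≤ erB m k * erS := mul_le_mul_of_nonneg_left (er_tsum_u_le k) (erB_pos m k).le

lemma er_G_eq {m : ℕ} (hm : 1 ≤ m) (k l : ℕ) :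
    ∑ i ∈ Finset.Icc 1 m, erB i k * erB (m + 1 - i) l =
      (if l = k then (m : ℝ) * erB (m + 1) k else 0) + erP m k l + erP m l k := by
  rcases eq_or_ne l k with rfl | hlk
  · rw [if_pos rfl, erP, if_pos rfl, add_zero, add_zero]
    have hterm : ∀ i ∈ Finset.Icc 1 m, erB i l * erB (m + 1 - i) l = erB (m + 1) l := by
      intro i hi
      rw [Finset.mem_Icc] at hi
      have he : 2 * i + 2 * (m + 1 - i) = 2 * (m + 1) := by omega
      rw [erB_eq, erB_eq, erB_eq, div_mul_div_comm, one_mul, ← pow_add, he]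
    rw [Finset.sum_congr rfl hterm, Finset.sum_const, Nat.card_Icc]
    simp [nsmul_eq_mul]
  · rw [if_neg hlk]
    have hJne : (erJ l) ^ 2 ≠ (erJ k) ^ 2 := erJ_sq_ne hlk
    set x : ℝ := 1 / (erJ k) ^ 2 with hx
    set y : ℝ := 1 / (erJ l) ^ 2 with hy
    have hJk := erJ_pos k
    have hJl := erJ_pos l
    have hx0 : x ≠ 0 := by rw [hx]; positivity
    have hy0 : y ≠ 0 := by rw [hy]; positivity
    have hbk : ∀ i : ℕ, erB i k = x ^ i := by
      intro i
      rw [erB_eq, hx, pow_mul, one_div_pow]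
    have hbl : ∀ i : ℕ, erB i l = y ^ i := by
      intro i
      rw [erB_eq, hy, pow_mul, one_div_pow]
    have hxyne : x ≠ y := by
      rw [hx, hy, one_div, one_div]
      intro hc
      exact hJne ((inv_inj.mp hc).symm)
    have hxy0 : x - y ≠ 0 := sub_ne_zero.mpr hxyne
    have hD : (erJ l) ^ 2 - (erJ k) ^ 2 ≠ 0 := sub_ne_zero.mpr hJne
    have hsum : ∑ i ∈ Finset.Icc 1 m, erB i k * erB (m + 1 - i) l
        = ∑ t ∈ Finset.range m, (x * y) * (x ^ t * y ^ (m - 1 - t)) := by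
      rw [show Finset.Icc 1 m = Finset.Ico 1 (m + 1) by rw [Finset.Ico_add_one_right_eq_Icc],
        Finset.sum_Ico_eq_sum_range]
      have hm1 : m + 1 - 1 = m := by omega
      rw [hm1]
      apply Finset.sum_congr rfl
      intro t ht
      rw [Finset.mem_range] at ht
      rw [hbk, hbl]
      have h1 : m + 1 - (1 + t) = (m - 1 - t) + 1 := by omega
      rw [h1, pow_add, pow_add]
      ring
    rw [hsum, ← Finset.mul_sum]
    have hgs : ∑ t ∈ Finset.range m, x ^ t * y ^ (m - 1 - t) = (x ^ m - y ^ m) / (x - y) := by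
      rw [eq_div_iff hxy0]
      exact geom_sum₂_mul x y m
    rw [hgs, erP, erP, if_neg hlk, if_neg (Ne.symm hlk), hbk, hbl]
    have hxyD : x - y = ((erJ l) ^ 2 - (erJ k) ^ 2) * (x * y) := by
      rw [hx, hy]
      field_simp
    rw [hxyD]
    have hDk : (erJ k) ^ 2 - (erJ l) ^ 2 = -((erJ l) ^ 2 - (erJ k) ^ 2) := by ring
    rw [hDk, div_neg]
    field_simp
    ring

lemma er_main {m : ℕ} (hm : 1 ≤ m) :
    ∑ i ∈ Finset.Icc 1 m, (∑' k : ℕ, erB i k) * (∑' k : ℕ, erB (m + 1 - i) k) =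
      ((2 * (m : ℝ) + 1) / 2) * ∑' k : ℕ, erB (m + 1) k := by
  have hsub : ∀ i ∈ Finset.Icc 1 m, 1 ≤ m + 1 - i ∧ m + 1 - i ≤ m := by
    intro i hi
    rw [Finset.mem_Icc] at hi
    omega
  -- step 1 : turn LHS into an iterated double sum
  have h1 : ∑ i ∈ Finset.Icc 1 m, (∑' k : ℕ, erB i k) * (∑' k : ℕ, erB (m + 1 - i) k) =
      ∑' k : ℕ, ∑' l : ℕ, ∑ i ∈ Finset.Icc 1 m, erB i k * erB (m + 1 - i) l := by
    have e1 : ∀ i ∈ Finset.Icc 1 m,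
        (∑' k : ℕ, erB i k) * (∑' k : ℕ, erB (m + 1 - i) k) =
          ∑' k : ℕ, ∑' l : ℕ, erB i k * erB (m + 1 - i) l := by
      intro i hi
      rw [← tsum_mul_right]
      apply tsum_congr
      intro k
      rw [← tsum_mul_left]
    rw [Finset.sum_congr rfl e1]
    rw [← Summable.tsum_finsetSum]
    · apply tsum_congr
      intro k
      rw [← Summable.tsum_finsetSum]
      intro i hi
      exact ((er_summable_B (hsub i hi).1).mul_left (erB i k)).congr (fun l => rfl)
    · intro i hi
      have : (fun k => ∑' l : ℕ, erB i k * erB (m + 1 - i) l) =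
          fun k => erB i k * ∑' l : ℕ, erB (m + 1 - i) l := by
        funext k; rw [tsum_mul_left]
      rw [this]
      exact (er_summable_B (by rw [Finset.mem_Icc] at hi; omega : 1 ≤ i)).mul_right _
  rw [h1]
  -- step 2 : rewrite the double sum pointwise
  have h2 : ∀ k : ℕ, ∑' l : ℕ, ∑ i ∈ Finset.Icc 1 m, erB i k * erB (m + 1 - i) l =
      (m : ℝ) * erB (m + 1) k + (1/4) * erB (m + 1) k + ∑' l : ℕ, erP m l k := by
    intro k
    have hdel : HasSum (fun l : ℕ => if l = k then (m : ℝ) * erB (m + 1) k else 0)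
        ((m : ℝ) * erB (m + 1) k) := hasSum_ite_eq k _
    have hrow := er_rowP m k
    have hcol := (er_summable_colP hm k).hasSum
    have htot := (hdel.add hrow).add hcol
    have hfun : (fun l : ℕ => ((if l = k then (m : ℝ) * erB (m + 1) k else 0) + erP m k l) +
        erP m l k) = fun l => ∑ i ∈ Finset.Icc 1 m, erB i k * erB (m + 1 - i) l := by
      funext l
      rw [er_G_eq hm k l]
    rw [hfun] at htot
    exact htot.tsum_eq
  rw [tsum_congr h2]
  -- step 3 : sum the three pieces over k
  have hB1 : HasSum (fun k => (m : ℝ) * erB (m + 1) k) ((m : ℝ) * ∑' k, erB (m + 1) k) :=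
    (er_summable_B (by omega : 1 ≤ m + 1)).hasSum.mul_left _
  have hB2 : HasSum (fun k => (1/4 : ℝ) * erB (m + 1) k) ((1/4 : ℝ) * ∑' k, erB (m + 1) k) :=
    (er_summable_B (by omega : 1 ≤ m + 1)).hasSum.mul_left _
  -- the column sums
  have hswap : Summable (fun p : ℕ × ℕ => erP m p.2 p.1) :=
    (er_summable_uncurryP hm).prod_symm
  have hcolsum : HasSum (fun k => ∑' l : ℕ, erP m l k)
      (∑' p : ℕ × ℕ, erP m p.2 p.1) := by
    apply hswap.hasSum.prod_fiberwise
    intro k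
    exact (er_summable_colP hm k).hasSum
  have hswapval : (∑' p : ℕ × ℕ, erP m p.2 p.1) = (1/4 : ℝ) * ∑' k, erB (m + 1) k := by
    have he : ∑' p : ℕ × ℕ, erP m p.2 p.1 = ∑' p : ℕ × ℕ, erP m p.1 p.2 := by
      exact ((Equiv.prodComm ℕ ℕ).tsum_eq (fun p : ℕ × ℕ => erP m p.2 p.1)).symm
    rw [he]
    have hfib : HasSum (fun k => (1/4 : ℝ) * erB (m + 1) k)
        (∑' p : ℕ × ℕ, erP m p.1 p.2) := by
      apply (er_summable_uncurryP hm).hasSum.prod_fiberwise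
      intro k
      exact er_rowP m k
    rw [← hfib.tsum_eq, tsum_mul_left]
  rw [hswapval] at hcolsum
  have htot := (hB1.add hB2).add hcolsum
  rw [htot.tsum_eq]
  push_cast
  ring

lemma er_tsum_one : (∑' k : ℕ, erB 1 k) = π ^ 2 / 8 := by
  have hz : HasSum (fun n : ℕ => 1 / (n : ℝ) ^ 2) (π ^ 2 / 6) := hasSum_zeta_two
  have hsum : Summable (fun n : ℕ => 1 / (n : ℝ) ^ 2) := hz.summable
  have heven : ∑' k : ℕ, 1 / ((2 * k : ℕ) : ℝ) ^ 2 = π ^ 2 / 24 := by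
    have : HasSum (fun k : ℕ => (1/4) * (1 / (k : ℝ) ^ 2)) ((1/4) * (π ^ 2 / 6)) :=
      hz.mul_left _
    have h2 : (fun k : ℕ => (1/4) * (1 / (k : ℝ) ^ 2)) = fun k : ℕ => 1 / ((2 * k : ℕ) : ℝ) ^ 2 := by
      funext k; push_cast; ring
    rw [h2] at this
    rw [this.tsum_eq]; ring
  have hOsum : Summable (fun k : ℕ => 1 / ((2 * k + 1 : ℕ) : ℝ) ^ 2) := by
    apply Summable.of_nonneg_of_le (fun k => by positivity) _ er_summable_sq
    intro k
    apply div_le_div_of_nonneg_left (by norm_num) (by positivity)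
    push_cast; nlinarith [Nat.cast_nonneg (α := ℝ) k]
  have hEsum : Summable (fun k : ℕ => 1 / ((2 * k : ℕ) : ℝ) ^ 2) := by
    apply Summable.of_nonneg_of_le (fun k => by positivity) _ er_summable_sq
    intro k
    rcases Nat.eq_zero_or_pos k with rfl | hk
    · simp
    · apply div_le_div_of_nonneg_left (by norm_num) (by positivity)
      push_cast; nlinarith [Nat.one_le_cast (α := ℝ) |>.mpr hk]
  have key := tsum_even_add_odd (f := fun n : ℕ => 1 / (n : ℝ) ^ 2) hEsum hOsum
  rw [hz.tsum_eq] at key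
  have hodd : ∑' k : ℕ, 1 / ((2 * k + 1 : ℕ) : ℝ) ^ 2 = π ^ 2 / 8 := by
    rw [heven] at key; linarith
  unfold erB
  rw [← hodd]
  apply tsum_congr; intro k; push_cast; norm_num

theorem euler_recursion (a : ℕ → ℝ)
    (ha : ∀ m : ℕ, 1 ≤ m →
      a m = (2 / π) ^ (2 * m) * ∑' k : ℕ, 1 / (2 * (k : ℝ) + 1) ^ (2 * m)) :
    a 1 = 1 / 2 ∧
    ∀ m : ℕ, 1 ≤ m →
      a (m + 1) = (2 / (2 * (m : ℝ) + 1)) * ∑ i ∈ Finset.Icc 1 m, a i * a (m + 1 - i) := by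
  have hπ : π ≠ 0 := Real.pi_ne_zero
  have hB : ∀ n : ℕ, (∑' k : ℕ, 1 / (2 * (k : ℝ) + 1) ^ (2 * n)) = ∑' k : ℕ, erB n k :=
    fun n => rfl
  constructor
  · rw [ha 1 le_rfl, hB 1, er_tsum_one]
    field_simp
    rw [show 2 * 1 = 2 from rfl, div_pow, mul_div_assoc', div_eq_iff (pow_ne_zero 2 hπ)]; ring
  · intro m hm
    rw [ha (m + 1) (by omega), hB (m + 1)]
    have hstep : ∑ i ∈ Finset.Icc 1 m, a i * a (m + 1 - i) =
        (2 / π) ^ (2 * (m + 1)) *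
          ∑ i ∈ Finset.Icc 1 m, (∑' k : ℕ, erB i k) * (∑' k : ℕ, erB (m + 1 - i) k) := by
      rw [Finset.mul_sum]
      apply Finset.sum_congr rfl
      intro i hi
      rw [Finset.mem_Icc] at hi
      rw [ha i hi.1, ha (m + 1 - i) (by omega), hB i, hB (m + 1 - i)]
      have hpow : (2 / π) ^ (2 * i) * (2 / π) ^ (2 * (m + 1 - i)) =
          (2 / π) ^ (2 * (m + 1)) := by
        rw [← pow_add]
        congr 1
        omega
      rw [mul_mul_mul_comm, hpow]
    rw [hstep, er_main hm]
    have h2m : (2 * (m : ℝ) + 1) ≠ 0 := by positivity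
    field_simp
end

section
/- For every real number x with |x| < π/2, the series ∑_{m=1}^∞ a_m·x^{2m}/m converges and equals -log(cos x), where a_m := (2/π)^{2m} · ∑_{k=0}^∞ 1/(2k+1)^{2m}. -/
open Real Filter Finset

private lemma aux_prod_split (z : ℝ) (n : ℕ) :
    ∏ j ∈ Finset.range (2 * n), (1 - z ^ 2 / ((j : ℝ) + 1) ^ 2) =
      (∏ k ∈ Finset.range n, (1 - z ^ 2 / (2 * (k : ℝ) + 1) ^ 2)) *
        ∏ k ∈ Finset.range n, (1 - (z / 2) ^ 2 / ((k : ℝ) + 1) ^ 2) := by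
  induction n with
  | zero => simp
  | succ n ih =>
    have h2 : 2 * (n + 1) = (2 * n + 1) + 1 := by ring
    rw [h2, Finset.prod_range_succ, Finset.prod_range_succ, Finset.prod_range_succ,
      Finset.prod_range_succ, ih]
    have key : 1 - z ^ 2 / (((2 * n + 1 : ℕ) : ℝ) + 1) ^ 2
        = 1 - (z / 2) ^ 2 / ((n : ℝ) + 1) ^ 2 := by
      push_cast
      congr 1
      rw [div_pow, div_div]
      congr 1
      ring
    rw [key]
    push_cast
    ring

private lemma aux_cos_prod (x : ℝ) (hx : |x| < π / 2) :
    Tendsto (fun n : ℕ => ∏ k ∈ Finset.range n,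
        (1 - (2 * x / π) ^ 2 / (2 * (k : ℝ) + 1) ^ 2)) atTop (nhds (Real.cos x)) := by
  have hπ : (0 : ℝ) < π := pi_pos
  rcases eq_or_ne x 0 with rfl | hx0
  · simpa using (tendsto_const_nhds : Tendsto (fun _ : ℕ => (1 : ℝ)) atTop (nhds 1))
  set z : ℝ := 2 * x / π with hzdef
  have hz1 : |z| < 1 := by
    rw [hzdef, abs_div, abs_of_pos hπ, div_lt_one hπ, abs_mul]
    rw [abs_of_pos (by norm_num : (0:ℝ) < 2)]
    linarith
  have hπz : π * z = 2 * x := by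
    rw [hzdef]; field_simp
  have hπz2 : π * (z / 2) = x := by
    rw [hzdef]; field_simp
  have hA := Real.tendsto_euler_sin_prod z
  have hB := Real.tendsto_euler_sin_prod (z / 2)
  have hsinx : Real.sin (π * (z / 2)) ≠ 0 := by
    have h1 := abs_lt.mp hx
    rw [hπz2, ne_eq, Real.sin_eq_zero_iff_of_lt_of_lt (by linarith) (by linarith)]
    exact hx0
  have hBpos : ∀ n : ℕ, (0 : ℝ) < ∏ j ∈ Finset.range n,
      (1 - (z / 2) ^ 2 / ((j : ℝ) + 1) ^ 2) := by
    intro n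
    apply Finset.prod_pos
    intro j _
    have h1 : (z / 2) ^ 2 < 1 := by
      have h3 : |z / 2| < 1 := by
        rw [abs_div, abs_of_pos (by norm_num : (0:ℝ) < 2)]
        calc |z| / 2 ≤ |z| := by linarith [abs_nonneg z]
          _ < 1 := hz1
      nlinarith [abs_nonneg (z / 2), sq_abs (z / 2)]
    have h2 : (1 : ℝ) ≤ ((j : ℝ) + 1) ^ 2 := by nlinarith [Nat.cast_nonneg (α := ℝ) j]
    have h4 : (z / 2) ^ 2 / ((j : ℝ) + 1) ^ 2 < 1 := by
      rw [div_lt_one (by positivity)]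
      linarith
    linarith
  have h2n : Tendsto (fun n : ℕ => 2 * n) atTop atTop :=
    tendsto_atTop_mono (fun n => by simp only [id_eq]; omega) tendsto_id
  have hA2 : Tendsto (fun n : ℕ =>
      π * z * ∏ j ∈ Finset.range (2 * n), (1 - z ^ 2 / ((j : ℝ) + 1) ^ 2))
      atTop (nhds (Real.sin (π * z))) := hA.comp h2n
  have hden : (2 : ℝ) * Real.sin (π * (z / 2)) ≠ 0 := mul_ne_zero two_ne_zero hsinx
  have hdiv : Tendsto (fun n : ℕ =>
      (π * z * ∏ j ∈ Finset.range (2 * n), (1 - z ^ 2 / ((j : ℝ) + 1) ^ 2)) /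
        (2 * (π * (z / 2) * ∏ j ∈ Finset.range n, (1 - (z / 2) ^ 2 / ((j : ℝ) + 1) ^ 2))))
      atTop (nhds (Real.sin (π * z) / (2 * Real.sin (π * (z / 2))))) :=
    hA2.div (hB.const_mul 2) hden
  have hcos : Real.sin (π * z) / (2 * Real.sin (π * (z / 2))) = Real.cos x := by
    rw [hπz, hπz2, Real.sin_two_mul]
    rw [hπz2] at hsinx
    field_simp
  rw [hcos] at hdiv
  apply hdiv.congr
  intro n
  rw [aux_prod_split, div_eq_iff (by
    rw [hπz2]
    exact mul_ne_zero two_ne_zero (mul_ne_zero hx0 (hBpos n).ne')), hπz, hπz2]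
  ring

private lemma aux_t_mem (x : ℝ) (hx : |x| < π / 2) (k : ℕ) :
    0 ≤ (2 * x / π) ^ 2 / (2 * (k : ℝ) + 1) ^ 2 ∧
      (2 * x / π) ^ 2 / (2 * (k : ℝ) + 1) ^ 2 < 1 := by
  have hπ : (0 : ℝ) < π := pi_pos
  have hz1 : |2 * x / π| < 1 := by
    rw [abs_div, abs_of_pos hπ, div_lt_one hπ, abs_mul]
    rw [abs_of_pos (by norm_num : (0:ℝ) < 2)]
    linarith
  have hz2 : (2 * x / π) ^ 2 < 1 := by
    nlinarith [abs_nonneg (2 * x / π), sq_abs (2 * x / π)]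
  have hk : (1 : ℝ) ≤ (2 * (k : ℝ) + 1) ^ 2 := by nlinarith [Nat.cast_nonneg (α := ℝ) k]
  constructor
  · positivity
  · rw [div_lt_one (by positivity)]
    linarith

private lemma aux_hasSum_log (x : ℝ) (hx : |x| < π / 2) :
    HasSum (fun k : ℕ => -Real.log (1 - (2 * x / π) ^ 2 / (2 * (k : ℝ) + 1) ^ 2))
      (-Real.log (Real.cos x)) := by
  have hcos : (0 : ℝ) < Real.cos x := by
    have h1 := abs_lt.mp hx
    exact Real.cos_pos_of_mem_Ioo ⟨by linarith, by linarith⟩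
  have hfpos : ∀ k : ℕ, (0 : ℝ) < 1 - (2 * x / π) ^ 2 / (2 * (k : ℝ) + 1) ^ 2 := by
    intro k
    linarith [(aux_t_mem x hx k).2]
  have hnonneg : ∀ k : ℕ, 0 ≤ -Real.log (1 - (2 * x / π) ^ 2 / (2 * (k : ℝ) + 1) ^ 2) := by
    intro k
    have h1 := (aux_t_mem x hx k).1
    have hle : 1 - (2 * x / π) ^ 2 / (2 * (k : ℝ) + 1) ^ 2 ≤ 1 := by linarith
    simpa using Real.log_nonpos (le_of_lt (hfpos k)) hle
  rw [hasSum_iff_tendsto_nat_of_nonneg hnonneg]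
  have hlog : Tendsto (fun n : ℕ => -Real.log (∏ k ∈ Finset.range n,
      (1 - (2 * x / π) ^ 2 / (2 * (k : ℝ) + 1) ^ 2))) atTop (nhds (-Real.log (Real.cos x))) :=
    ((Real.continuousAt_log hcos.ne').tendsto.comp (aux_cos_prod x hx)).neg
  apply hlog.congr
  intro n
  rw [Real.log_prod (fun k _ => (hfpos k).ne'), ← Finset.sum_neg_distrib]

private noncomputable def auxF (x : ℝ) : ℕ × ℕ → ℝ := fun p =>
  ((2 * x / π) ^ 2 / (2 * (p.2 : ℝ) + 1) ^ 2) ^ (p.1 + 1) / ((p.1 : ℝ) + 1)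

private lemma auxF_eq (x : ℝ) (hπ : (0:ℝ) < π) (m k : ℕ) : auxF x (m, k) =
    (1 / (2 * (k : ℝ) + 1) ^ (2 * (m + 1))) *
      ((2 / π) ^ (2 * (m + 1)) * x ^ (2 * (m + 1)) / ((m : ℝ) + 1)) := by
  rw [auxF]
  simp only
  rw [div_pow, ← pow_mul, ← pow_mul,
    show (2 * x / π) = (2 / π) * x by ring, mul_pow]
  ring

private lemma auxF_nonneg (x : ℝ) (hx : |x| < π / 2) (p : ℕ × ℕ) : 0 ≤ auxF x p := by
  obtain ⟨m, k⟩ := p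
  rw [auxF]
  simp only
  have h1 := (aux_t_mem x hx k).1
  positivity

private lemma auxF_row (x : ℝ) (hx : |x| < π / 2) (k : ℕ) :
    HasSum (fun m : ℕ => auxF x (m, k))
      (-Real.log (1 - (2 * x / π) ^ 2 / (2 * (k : ℝ) + 1) ^ 2)) := by
  have ht := aux_t_mem x hx k
  have habs : |(2 * x / π) ^ 2 / (2 * (k : ℝ) + 1) ^ 2| < 1 := by
    rw [abs_of_nonneg ht.1]; exact ht.2
  have h := hasSum_pow_div_log_of_abs_lt_one habs
  simpa only [auxF] using h

private lemma auxF_hasSum (x : ℝ) (hx : |x| < π / 2) :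
    HasSum (auxF x) (-Real.log (Real.cos x)) := by
  have hG : Summable (fun p : ℕ × ℕ => auxF x (p.2, p.1)) := by
    rw [summable_prod_of_nonneg (fun p => auxF_nonneg x hx (p.2, p.1))]
    refine ⟨fun k => (auxF_row x hx k).summable, ?_⟩
    exact (aux_hasSum_log x hx).summable.congr fun k => ((auxF_row x hx k).tsum_eq).symm
  have hGsum : HasSum (fun p : ℕ × ℕ => auxF x (p.2, p.1)) (-Real.log (Real.cos x)) := by
    have h1 : HasSum (fun k : ℕ =>
        -Real.log (1 - (2 * x / π) ^ 2 / (2 * (k : ℝ) + 1) ^ 2))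
        (∑' p : ℕ × ℕ, auxF x (p.2, p.1)) :=
      hG.hasSum.prod_fiberwise fun k => auxF_row x hx k
    have h2 := h1.unique (aux_hasSum_log x hx)
    rw [← h2]
    exact hG.hasSum
  exact (Equiv.prodComm ℕ ℕ).hasSum_iff.mp hGsum

theorem hasSum_neg_log_cos_series (x : ℝ) (hx : |x| < π / 2) :
    HasSum
      (fun m : ℕ =>
        ((2 / π) ^ (2 * (m + 1)) * ∑' k : ℕ, 1 / (2 * (k : ℝ) + 1) ^ (2 * (m + 1))) *
          x ^ (2 * (m + 1)) / ((m : ℝ) + 1))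
      (-Real.log (Real.cos x)) := by
  have hπ : (0 : ℝ) < π := pi_pos
  have hFsum := auxF_hasSum x hx
  have hcol : ∀ m : ℕ, HasSum (fun k : ℕ => auxF x (m, k))
      (((2 / π) ^ (2 * (m + 1)) * ∑' k : ℕ, 1 / (2 * (k : ℝ) + 1) ^ (2 * (m + 1))) *
        x ^ (2 * (m + 1)) / ((m : ℝ) + 1)) := by
    intro m
    have hinj : Function.Injective fun k : ℕ => ((m, k) : ℕ × ℕ) := fun a b h => by
      simpa using h
    have hs : Summable (fun k : ℕ => auxF x (m, k)) := hFsum.summable.comp_injective hinj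
    have ht : ∑' k : ℕ, auxF x (m, k) =
        ((2 / π) ^ (2 * (m + 1)) * ∑' k : ℕ, 1 / (2 * (k : ℝ) + 1) ^ (2 * (m + 1))) *
          x ^ (2 * (m + 1)) / ((m : ℝ) + 1) := by
      rw [tsum_congr fun k => auxF_eq x hπ m k, tsum_mul_right]
      ring
    exact ht ▸ hs.hasSum
  exact hFsum.prod_fiberwise hcol
end

section
/- Let t : ℝ → ℝ be differentiable on the open interval (-π/2, π/2) with t(0) = 0 and t'(x) = 1/2 + 2·t(x)² for all x in (-π/2, π/2). Then t(x) = (tan x)/2 for all x in (-π/2, π/2). -/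
open Real

theorem ode_uniqueness_half_tan (t : ℝ → ℝ)
    (hdiff : ∀ x ∈ Set.Ioo (-(π / 2)) (π / 2), DifferentiableAt ℝ t x)
    (h0 : t 0 = 0)
    (hderiv : ∀ x ∈ Set.Ioo (-(π / 2)) (π / 2), deriv t x = 1 / 2 + 2 * t x ^ 2) :
    ∀ x ∈ Set.Ioo (-(π / 2)) (π / 2), t x = Real.tan x / 2 := by
  have hπ : 0 < π / 2 := by positivity
  set s := Set.Ioo (-(π / 2)) (π / 2) with hs
  set f : ℝ → ℝ := fun y => Real.arctan (2 * t y) - y with hf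
  have hfd : ∀ x ∈ s, HasDerivAt f 0 x := by
    intro x hx
    have ht : HasDerivAt t (1 / 2 + 2 * t x ^ 2) x := by
      have := (hdiff x hx).hasDerivAt
      rwa [hderiv x hx] at this
    have h1 : HasDerivAt (fun y => 2 * t y) (2 * (1 / 2 + 2 * t x ^ 2)) x :=
      ht.const_mul 2
    have h2 := (Real.hasDerivAt_arctan (2 * t x)).comp x h1
    have h3 : (1 / (1 + (2 * t x) ^ 2)) * (2 * (1 / 2 + 2 * t x ^ 2)) = 1 := by
      have hpos : (0:ℝ) < 1 + (2 * t x) ^ 2 := by positivity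
      field_simp
    have h4 : HasDerivAt (fun y => Real.arctan (2 * t y)) 1 x := by
      rw [← h3]; exact h2
    have h5 := h4.sub (hasDerivAt_id x)
    rw [sub_self] at h5; exact h5
  intro x hx
  have key : f x = f 0 := by
    rcases le_total 0 x with h | h
    · have hsub : Set.Icc (0:ℝ) x ⊆ s := Set.Icc_subset_Ioo (by linarith) hx.2
      exact constant_of_has_deriv_right_zero
        (fun y hy => ((hfd y (hsub hy)).continuousAt).continuousWithinAt)
        (fun y hy => ((hfd y (hsub (Set.Ico_subset_Icc_self hy))).hasDerivWithinAt))
        x (Set.right_mem_Icc.2 h)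
    · have hsub : Set.Icc x 0 ⊆ s := Set.Icc_subset_Ioo hx.1 (by linarith)
      have := constant_of_has_deriv_right_zero
        (f := f) (a := x) (b := 0)
        (fun y hy => ((hfd y (hsub hy)).continuousAt).continuousWithinAt)
        (fun y hy => ((hfd y (hsub (Set.Ico_subset_Icc_self hy))).hasDerivWithinAt))
        0 (Set.right_mem_Icc.2 h)
      exact this.symm
  have hf0 : f 0 = 0 := by simp [hf, h0]
  have harc : Real.arctan (2 * t x) = x := by
    have : f x = 0 := key.trans hf0
    simp only [hf] at this
    linarith
  have := congrArg Real.tan harc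
  rw [Real.tan_arctan] at this
  linarith
end
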